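/- Let d ≥ 3 be an integer and let 0 < α < π. Then ∫_α^π (1 − cos η)^{−(d−2)/2} · ((1 − cos α)/(1 − cos η))^{(d−1)/2} · ((1 − cos α)/(cos α − cos η))^{1/2} · ₂F₁(1, (d−1)/2; 1/2; (cos α − cos η)/(1 − cos η)) · sin^{d−2}(η) dη = (√π · 2^{(d−2)/2} · Γ((d−1)/2) / Γ((d−2)/2)) · B(cos²(α/2); (d−2)/2, 1/2). -/

import Mathlib

open Real MeasureTheory

/-- The Pochhammer symbol `(a)_n = a(a+1)⋯(a+n−1)`, with `(a)_0 = 1`. -/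
noncomputable def poch (a : ℝ) (n : ℕ) : ℝ := ∏ i ∈ Finset.range n, (a + i)

/-- The Gauss hypergeometric function `₂F₁(a,b;c;z) = Σₙ ((a)ₙ(b)ₙ/(c)ₙ) zⁿ/n!`. -/
noncomputable def hyp2F1 (a b c z : ℝ) : ℝ :=
  ∑' n : ℕ, poch a n * poch b n / poch c n * z ^ n / (n.factorial : ℝ)

/-- The incomplete Beta function `B(z; a, b) = ∫₀^z t^{a−1}(1−t)^{b−1} dt`. -/
noncomputable def incBeta (z a b : ℝ) : ℝ := ∫ t in (0:ℝ)..z, t ^ (a - 1) * (1 - t) ^ (b - 1)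

open Set Filter Topology

lemma poch_zero (a : ℝ) : poch a 0 = 1 := by simp [poch]

lemma poch_succ (a : ℝ) (n : ℕ) : poch a (n + 1) = poch a n * (a + n) := by
  simp [poch, Finset.prod_range_succ]

lemma poch_pos {a : ℝ} (ha : 0 < a) (n : ℕ) : 0 < poch a n := by
  induction n with
  | zero => simp [poch_zero]
  | succ n ih =>
    rw [poch_succ]
    have : (0:ℝ) ≤ n := Nat.cast_nonneg n
    exact mul_pos ih (by linarith)

lemma poch_le {a b : ℝ} (ha : 0 < a) (hab : a ≤ b) (n : ℕ) : poch a n ≤ poch b n := by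
  induction n with
  | zero => simp [poch_zero]
  | succ n ih =>
    rw [poch_succ, poch_succ]
    have h1 : (0:ℝ) ≤ n := Nat.cast_nonneg n
    have hb : 0 < b := lt_of_lt_of_le ha hab
    exact mul_le_mul ih (by linarith) (by linarith) (le_of_lt (poch_pos hb n))

lemma poch_one (n : ℕ) : poch 1 n = n.factorial := by
  induction n with
  | zero => simp [poch_zero]
  | succ n ih =>
    rw [poch_succ, ih, Nat.factorial_succ]
    push_cast; ring

lemma Gamma_add_nat {a : ℝ} (ha : 0 < a) (n : ℕ) :
    Real.Gamma (a + n) = poch a n * Real.Gamma a := by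
  induction n with
  | zero => simp [poch_zero]
  | succ n ih =>
    have h1 : (0:ℝ) ≤ n := Nat.cast_nonneg n
    have h2 : a + ((n:ℕ):ℝ) ≠ 0 := by push_cast; linarith
    have h3 : a + ((n + 1 : ℕ):ℝ) = (a + n) + 1 := by push_cast; ring
    rw [h3, Real.Gamma_add_one h2, ih, poch_succ]; ring

lemma betaReal_Ioo {p q : ℝ} (hp : 0 < p) (hq : 0 < q) :
    ∫ x in Ioo (0:ℝ) 1, x ^ (p - 1) * (1 - x) ^ (q - 1)
      = Real.Gamma p * Real.Gamma q / Real.Gamma (p + q) := by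
  have key : Complex.Gamma p * Complex.Gamma q
      = Complex.Gamma (p + q) * Complex.betaIntegral p q :=
    Complex.Gamma_mul_Gamma_eq_betaIntegral (by simpa using hp) (by simpa using hq)
  have hbeta : Complex.betaIntegral p q
      = ((∫ x in (0:ℝ)..1, x ^ (p - 1) * (1 - x) ^ (q - 1) : ℝ) : ℂ) := by
    rw [Complex.betaIntegral, ← intervalIntegral.integral_ofReal]
    refine intervalIntegral.integral_congr fun x hx => ?_
    rw [uIcc_of_le (by norm_num : (0:ℝ) ≤ 1)] at hx
    obtain ⟨hx0, hx1⟩ := hx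
    have e1 : (p:ℂ) - 1 = ((p - 1 : ℝ) : ℂ) := by push_cast; ring
    have e2 : (1:ℂ) - (x:ℂ) = ((1 - x : ℝ) : ℂ) := by push_cast; ring
    have e3 : (q:ℂ) - 1 = ((q - 1 : ℝ) : ℂ) := by push_cast; ring
    rw [e1, e2, e3, ← Complex.ofReal_cpow hx0, ← Complex.ofReal_cpow (by linarith),
      ← Complex.ofReal_mul]
  have hGpos : 0 < Real.Gamma (p + q) := Real.Gamma_pos_of_pos (by linarith)
  have key2 : Real.Gamma p * Real.Gamma q
      = Real.Gamma (p + q) * ∫ x in (0:ℝ)..1, x ^ (p - 1) * (1 - x) ^ (q - 1) := by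
    have := key
    rw [hbeta, ← Complex.ofReal_add, Complex.Gamma_ofReal, Complex.Gamma_ofReal,
      Complex.Gamma_ofReal, ← Complex.ofReal_mul, ← Complex.ofReal_mul] at this
    exact_mod_cast this
  have hIoo : ∫ x in (0:ℝ)..1, x ^ (p - 1) * (1 - x) ^ (q - 1)
      = ∫ x in Ioo (0:ℝ) 1, x ^ (p - 1) * (1 - x) ^ (q - 1) := by
    rw [intervalIntegral.integral_of_le (by norm_num : (0:ℝ) ≤ 1),
      MeasureTheory.integral_Ioc_eq_integral_Ioo]
  rw [← hIoo, key2]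
  field_simp


lemma betaReal_scaled {p q m : ℝ} (hm : 0 < m) (hp : 0 < p) (hq : 0 < q) :
    ∫ x in Ioo (0:ℝ) m, x ^ (p - 1) * (m - x) ^ (q - 1)
      = m ^ (p + q - 1) * (Real.Gamma p * Real.Gamma q / Real.Gamma (p + q)) := by
  have himg : (fun t : ℝ => m * t) '' Ioo (0:ℝ) 1 = Ioo 0 m := by
    ext y
    constructor
    · rintro ⟨t, ⟨ht0, ht1⟩, rfl⟩
      exact ⟨by positivity, mul_lt_of_lt_one_right hm ht1⟩
    · rintro ⟨hy0, hym⟩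
      exact ⟨y / m, ⟨by positivity, by rw [div_lt_one hm]; exact hym⟩, by field_simp⟩
  have hderiv : ∀ t ∈ Ioo (0:ℝ) 1,
      HasDerivWithinAt (fun t : ℝ => m * t) m (Ioo (0:ℝ) 1) t := fun t _ =>
    ((hasDerivAt_id t).const_mul m).hasDerivWithinAt.congr_deriv (by simp)
  have hinj : InjOn (fun t : ℝ => m * t) (Ioo (0:ℝ) 1) := fun s _ t _ h =>
    mul_left_cancel₀ hm.ne' h
  rw [← himg, integral_image_eq_integral_abs_deriv_smul measurableSet_Ioo hderiv hinj]
  have hcongr : ∀ t ∈ Ioo (0:ℝ) 1,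
      |m| • ((m * t) ^ (p - 1) * (m - m * t) ^ (q - 1))
        = m ^ (p + q - 1) * (t ^ (p - 1) * (1 - t) ^ (q - 1)) := by
    intro t ⟨ht0, ht1⟩
    have hpow : m * m ^ (p - 1) * m ^ (q - 1) = m ^ (p + q - 1) := by
      rw [mul_assoc, ← Real.rpow_add hm, mul_comm, ← Real.rpow_add_one hm.ne']
      congr 1; ring
    rw [abs_of_pos hm, smul_eq_mul, show m - m * t = m * (1 - t) by ring,
      Real.mul_rpow hm.le ht0.le, Real.mul_rpow hm.le (by linarith),
      show m * (m ^ (p - 1) * t ^ (p - 1) * (m ^ (q - 1) * (1 - t) ^ (q - 1)))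
        = m * m ^ (p - 1) * m ^ (q - 1) * (t ^ (p - 1) * (1 - t) ^ (q - 1)) from by ring, hpow]
  rw [MeasureTheory.setIntegral_congr_fun measurableSet_Ioo hcongr,
    MeasureTheory.integral_const_mul, betaReal_Ioo hp hq]

lemma betaIntegrableOn {p q m : ℝ} (hm : 0 < m) (hp : 0 < p) (hq : 1 ≤ q) :
    IntegrableOn (fun x : ℝ => x ^ (p - 1) * (m - x) ^ (q - 1)) (Ioo 0 m) := by
  have h1 : IntervalIntegrable (fun x : ℝ => x ^ (p - 1)) volume 0 m :=
    intervalIntegral.intervalIntegrable_rpow' (by linarith)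
  have h2 : ContinuousOn (fun x : ℝ => (m - x) ^ (q - 1)) (uIcc 0 m) :=
    ((Real.continuous_rpow_const (by linarith)).comp
      (continuous_const.sub continuous_id)).continuousOn
  exact ((h1.mul_continuousOn h2).1).mono_set Ioo_subset_Ioc_self


noncomputable def gseq (a : ℝ) (n : ℕ) : ℝ := poch (a + 1/2) n / poch (a + 1) n

lemma gseq_pos {a : ℝ} (ha : 0 < a) (n : ℕ) : 0 < gseq a n :=
  div_pos (poch_pos (by linarith) n) (poch_pos (by linarith) n)

lemma gseq_le_one {a : ℝ} (ha : 0 < a) (n : ℕ) : gseq a n ≤ 1 := by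
  rw [gseq, div_le_one (poch_pos (by linarith) n)]
  exact poch_le (by linarith) (by linarith) n

lemma gseq_zero (a : ℝ) : gseq a 0 = 1 := by simp [gseq, poch_zero]

lemma gseq_rec {a : ℝ} (ha : 0 < a) (n : ℕ) :
    gseq a (n + 1) * (a + 1 + n) = gseq a n * (a + 1/2 + n) := by
  have h1 : (0:ℝ) ≤ n := Nat.cast_nonneg n
  have h2 : poch (a + 1) n ≠ 0 := (poch_pos (by linarith) n).ne'
  have h3 : a + 1 + (n:ℝ) ≠ 0 := by linarith
  rw [gseq, gseq, poch_succ, poch_succ]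
  field_simp

lemma summable_gseq_pow {a y : ℝ} (ha : 0 < a) (hy : |y| < 1) :
    Summable (fun n => gseq a n * y ^ n) := by
  refine Summable.of_norm_bounded (summable_geometric_of_lt_one (abs_nonneg y) hy) ?_
  intro n
  rw [norm_mul, norm_pow, Real.norm_eq_abs, Real.norm_eq_abs,
    abs_of_pos (gseq_pos ha n)]
  calc gseq a n * |y| ^ n ≤ 1 * |y| ^ n := by
        exact mul_le_mul_of_nonneg_right (gseq_le_one ha n) (by positivity)
    _ = |y| ^ n := one_mul _

lemma summable_deriv_bound {r : ℝ} (hr0 : 0 ≤ r) (hr : r < 1) :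
    Summable (fun n : ℕ => (n : ℝ) * r ^ (n - 1)) := by
  have h1 : Summable (fun n : ℕ => (n : ℝ) * r ^ n) :=
    (summable_pow_mul_geometric_of_norm_lt_one 1
      (by rwa [Real.norm_eq_abs, abs_of_nonneg hr0])).congr (fun n => by push_cast; ring)
  have h2 : Summable (fun n : ℕ => r ^ n) := summable_geometric_of_lt_one hr0 hr
  have h3 : Summable (fun n : ℕ => ((n:ℝ) + 1) * r ^ n) :=
    ((h1.add h2).congr (fun n => by push_cast; ring))
  refine (summable_nat_add_iff (f := fun n : ℕ => (n : ℝ) * r ^ (n - 1)) 1).1 ?_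
  refine h3.congr fun n => ?_
  simp only [Nat.add_sub_cancel]
  push_cast
  ring

lemma hasDerivAt_G {a : ℝ} (ha : 0 < a) {r y : ℝ} (hr0 : 0 < r) (hr : r < 1)
    (hy : y ∈ Ioo (-r) r) :
    HasDerivAt (fun z => ∑' n, gseq a n * z ^ n)
      (∑' n, gseq a n * ((n : ℝ) * y ^ (n - 1))) y := by
  refine hasDerivAt_tsum_of_isPreconnected (u := fun n : ℕ => (n : ℝ) * r ^ (n - 1))
    (summable_deriv_bound hr0.le hr) isOpen_Ioo (convex_Ioo _ _).isPreconnected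
    (fun n z _ => (hasDerivAt_pow n z).const_mul (gseq a n)) ?_ (y₀ := 0)
    ⟨by linarith, hr0⟩ ?_ hy
  · intro n z hz
    rw [Real.norm_eq_abs, abs_mul, abs_mul, abs_of_pos (gseq_pos ha n)]
    have hz' : |z| ≤ r := by
      rw [abs_le]; exact ⟨(mem_Ioo.1 hz).1.le, (mem_Ioo.1 hz).2.le⟩
    calc gseq a n * (|(n:ℝ)| * |z ^ (n-1)|) ≤ 1 * (|(n:ℝ)| * |z ^ (n-1)|) :=
          mul_le_mul_of_nonneg_right (gseq_le_one ha n) (by positivity)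
      _ = (n:ℝ) * |z| ^ (n-1) := by rw [one_mul, abs_pow, Nat.abs_cast]
      _ ≤ (n:ℝ) * r ^ (n-1) := by
          exact mul_le_mul_of_nonneg_left (pow_le_pow_left₀ (abs_nonneg z) hz' _) (Nat.cast_nonneg n)
  · apply summable_of_ne_finset_zero (s := {0})
    intro n hn
    simp only [Finset.mem_singleton] at hn
    rw [zero_pow hn, mul_zero]

lemma G_ode {a y : ℝ} (ha : 0 < a) (hy0 : 0 < y) (hy1 : y < 1) :
    y * (1 - y) * (∑' n, gseq a n * ((n:ℝ) * y ^ (n - 1)))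
      + (a - (a + 1/2) * y) * (∑' n, gseq a n * y ^ n) = a := by
  set S : ℕ → ℝ := fun n => ((n:ℝ) + a) * gseq a n * y ^ n with hS
  have hyabs : |y| < 1 := by rw [abs_of_pos hy0]; exact hy1
  have hSsum : Summable S := by
    have hb1 : Summable (fun n : ℕ => (n:ℝ) * y ^ n) :=
      (summable_pow_mul_geometric_of_norm_lt_one 1
        (by rwa [Real.norm_eq_abs, abs_of_pos hy0])).congr (fun n => by push_cast; ring)
    have hb2 : Summable (fun n : ℕ => a * y ^ n) :=
      ((summable_geometric_of_lt_one hy0.le hy1).mul_left a)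
    have hb : Summable (fun n : ℕ => ((n:ℝ) + a) * y ^ n) :=
      (hb1.add hb2).congr (fun n => by ring)
    refine Summable.of_norm_bounded hb ?_
    intro n
    rw [Real.norm_eq_abs, abs_mul, abs_mul, abs_of_pos (gseq_pos ha n),
      abs_of_nonneg (by positivity : (0:ℝ) ≤ ((n:ℝ) + a)), abs_pow, abs_of_pos hy0]
    calc ((n:ℝ) + a) * gseq a n * y ^ n ≤ ((n:ℝ) + a) * 1 * y ^ n := by
          exact mul_le_mul_of_nonneg_right
            (mul_le_mul_of_nonneg_left (gseq_le_one ha n) (by positivity))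
            (pow_nonneg hy0.le n)
      _ = ((n:ℝ) + a) * y ^ n := by ring
  have hS1sum : Summable (fun n => S (n + 1)) := (summable_nat_add_iff 1).2 hSsum
  have hderivsum : Summable (fun n => gseq a n * ((n:ℝ) * y ^ (n - 1))) := by
    refine Summable.of_norm_bounded (summable_deriv_bound hy0.le hy1) ?_
    intro n
    rw [Real.norm_eq_abs, abs_mul, abs_mul, abs_of_pos (gseq_pos ha n), abs_pow,
      abs_of_pos hy0, Nat.abs_cast]
    calc gseq a n * ((n:ℝ) * y ^ (n-1)) ≤ 1 * ((n:ℝ) * y ^ (n-1)) := by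
          exact mul_le_mul_of_nonneg_right (gseq_le_one ha n)
            (by positivity)
      _ = (n:ℝ) * y ^ (n-1) := one_mul _
  have hgsum : Summable (fun n => gseq a n * y ^ n) := summable_gseq_pow ha hyabs
  have key : ∀ n : ℕ, y * (1 - y) * (gseq a n * ((n:ℝ) * y ^ (n - 1)))
      + (a - (a + 1/2) * y) * (gseq a n * y ^ n) = S n - S (n + 1) := by
    intro n
    cases n with
    | zero =>
      have h0 := gseq_rec ha 0
      rw [gseq_zero] at h0
      push_cast at h0
      simp only [hS]
      push_cast
      simp only [gseq_zero, pow_zero, pow_one, Nat.zero_sub, mul_zero, zero_mul, mul_one]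
      ring_nf
      nlinarith [h0]
    | succ k =>
      have h1 := gseq_rec ha (k + 1)
      push_cast at h1
      simp only [hS, Nat.add_sub_cancel]
      push_cast
      linear_combination (y ^ (k + 2)) * h1
  calc y * (1 - y) * (∑' n, gseq a n * ((n:ℝ) * y ^ (n - 1)))
        + (a - (a + 1/2) * y) * (∑' n, gseq a n * y ^ n)
      = ∑' n, (y * (1 - y) * (gseq a n * ((n:ℝ) * y ^ (n - 1)))
          + (a - (a + 1/2) * y) * (gseq a n * y ^ n)) := by
        rw [← tsum_mul_left, ← tsum_mul_left]
        exact (Summable.tsum_add (hderivsum.mul_left _) (hgsum.mul_left _)).symm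
    _ = ∑' n, (S n - S (n + 1)) := by exact tsum_congr key
    _ = (∑' n, S n) - (∑' n, S (n + 1)) := Summable.tsum_sub hSsum hS1sum
    _ = S 0 := by rw [Summable.tsum_eq_zero_add hSsum]; ring
    _ = a := by simp [hS, gseq_zero]


lemma incBeta_aux {a m : ℝ} (ha : 0 < a) (hm0 : 0 < m) (hm1 : m < 1) :
    ∫ t in (0:ℝ)..m, t ^ (a - 1) * (1 - t) ^ ((1:ℝ)/2 - 1)
      = m ^ a * (1 - m) ^ ((1:ℝ)/2) * (∑' n, gseq a n * m ^ n) / a := by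
  set f : ℝ → ℝ := fun t => t ^ (a - 1) * (1 - t) ^ ((1:ℝ)/2 - 1) with hf
  set Θ : ℝ → ℝ := fun y => y ^ a * (1 - y) ^ ((1:ℝ)/2) * (∑' n, gseq a n * y ^ n) / a
    with hΘdef
  have hint : IntervalIntegrable f volume 0 m := by
    have h1 : IntervalIntegrable (fun t : ℝ => t ^ (a - 1)) volume 0 m :=
      intervalIntegral.intervalIntegrable_rpow' (by linarith)
    have h2 : ContinuousOn (fun t : ℝ => (1 - t) ^ ((1:ℝ)/2 - 1)) (uIcc 0 m) := by
      intro t ht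
      rw [uIcc_of_le hm0.le] at ht
      have h1t : (1:ℝ) - t ≠ 0 := ne_of_gt (by have := ht.2; linarith)
      exact ((Real.continuousAt_rpow_const _ _ (Or.inl h1t)).comp
        ((continuous_const.sub continuous_id).continuousAt)).continuousWithinAt
    exact h1.mul_continuousOn h2
  have hΘ : ∀ y ∈ Ioo (0:ℝ) 1, HasDerivAt Θ (f y) y := by
    rintro y ⟨hy0, hy1⟩
    set r : ℝ := (1 + y) / 2 with hrdef
    have hr0 : 0 < r := by rw [hrdef]; linarith
    have hr1 : r < 1 := by rw [hrdef]; linarith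
    have hyr : y ∈ Ioo (-r) r := by constructor <;> (rw [hrdef]; try linarith)
    have hG := hasDerivAt_G ha hr0 hr1 hyr
    have h1 : HasDerivAt (fun z : ℝ => z ^ a) (a * y ^ (a - 1)) y :=
      Real.hasDerivAt_rpow_const (Or.inl hy0.ne')
    have h2 : HasDerivAt (fun z : ℝ => (1 - z) ^ ((1:ℝ)/2))
        (((1:ℝ)/2 * (1 - y) ^ ((1:ℝ)/2 - 1)) * (-1)) y := by
      have houter : HasDerivAt (fun w : ℝ => w ^ ((1:ℝ)/2))
          ((1:ℝ)/2 * (1 - y) ^ ((1:ℝ)/2 - 1)) (1 - y) :=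
        Real.hasDerivAt_rpow_const (Or.inl (by intro h; nlinarith))
      have hinner : HasDerivAt (fun z : ℝ => 1 - z) (-1) y := by
        simpa using (hasDerivAt_id y).const_sub 1
      exact houter.comp y hinner
    have H := ((h1.mul h2).mul hG).div_const a
    have hya : y ^ (a - 1) * y = y ^ a := by
      rw [← Real.rpow_add_one hy0.ne']; norm_num
    have h1ya : (1 - y) ^ ((1:ℝ)/2 - 1) * (1 - y) = (1 - y) ^ ((1:ℝ)/2) := by
      rw [← Real.rpow_add_one (by intro h; nlinarith : (1:ℝ) - y ≠ 0)]; norm_num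
    have hode := G_ode ha hy0 hy1
    have heq : ((a * y ^ (a - 1) * (1 - y) ^ ((1:ℝ)/2)
          + y ^ a * (((1:ℝ)/2 * (1 - y) ^ ((1:ℝ)/2 - 1)) * (-1)))
          * (∑' n, gseq a n * y ^ n)
          + y ^ a * (1 - y) ^ ((1:ℝ)/2) * (∑' n, gseq a n * ((n:ℝ) * y ^ (n - 1)))) / a
        = f y := by
      rw [hf]
      rw [div_eq_iff ha.ne', ← hya, ← h1ya]
      simp only
      linear_combination (y ^ (a - 1) * (1 - y) ^ ((1:ℝ)/2 - 1)) * hode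
    rw [← heq]
    exact H
  have key : ∀ ε ∈ Ioo (0:ℝ) m,
      (∫ t in (0:ℝ)..m, f t) - Θ m = (∫ t in (0:ℝ)..ε, f t) - Θ ε := by
    rintro ε ⟨hε0, hεm⟩
    have hsub : uIcc ε m ⊆ Ioo 0 1 := by
      rw [uIcc_of_le hεm.le]
      exact fun x hx => ⟨lt_of_lt_of_le hε0 hx.1, lt_of_le_of_lt hx.2 hm1⟩
    have hmono : uIcc ε m ⊆ uIcc 0 m := by
      rw [uIcc_of_le hεm.le, uIcc_of_le hm0.le]
      exact Icc_subset_Icc hε0.le le_rfl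
    have hmono2 : uIcc 0 ε ⊆ uIcc 0 m := by
      rw [uIcc_of_le hε0.le, uIcc_of_le hm0.le]
      exact Icc_subset_Icc le_rfl hεm.le
    have hint2 : IntervalIntegrable f volume ε m := hint.mono_set hmono
    have hint3 : IntervalIntegrable f volume 0 ε := hint.mono_set hmono2
    have h2 : ∫ t in ε..m, f t = Θ m - Θ ε :=
      intervalIntegral.integral_eq_sub_of_hasDerivAt (fun x hx => hΘ x (hsub hx)) hint2
    have h3 : (∫ t in (0:ℝ)..ε, f t) + ∫ t in ε..m, f t = ∫ t in (0:ℝ)..m, f t :=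
      intervalIntegral.integral_add_adjacent_intervals hint3 hint2
    linarith
  have hl : (𝓝[Ioo (0:ℝ) m] 0).NeBot := by
    apply mem_closure_iff_nhdsWithin_neBot.1
    rw [closure_Ioo hm0.ne]
    exact ⟨le_refl 0, hm0.le⟩
  have t1 : Tendsto (fun ε => (∫ t in (0:ℝ)..ε, f t) - Θ ε) (𝓝[Ioo (0:ℝ) m] 0)
      (𝓝 ((∫ t in (0:ℝ)..m, f t) - Θ m)) := by
    apply tendsto_const_nhds.congr'
    filter_upwards [self_mem_nhdsWithin] with ε hε
    exact key ε hε
  have tΨ : Tendsto (fun ε => ∫ t in (0:ℝ)..ε, f t) (𝓝[Ioo (0:ℝ) m] 0) (𝓝 0) := by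
    have hcont := intervalIntegral.continuousOn_primitive_interval' hint
      (left_mem_uIcc (a := (0:ℝ)) (b := m))
    have h0 : (0:ℝ) ∈ uIcc (0:ℝ) m := left_mem_uIcc
    have h' : ContinuousWithinAt (fun b => ∫ t in (0:ℝ)..b, f t) (Ioo 0 m) 0 :=
      (hcont 0 h0).mono (by rw [uIcc_of_le hm0.le]; exact Ioo_subset_Icc_self)
    simpa [ContinuousWithinAt] using h'
  have tΘ : Tendsto (fun ε => Θ ε) (𝓝[Ioo (0:ℝ) m] 0) (𝓝 0) := by
    have hGm : Summable (fun n => gseq a n * m ^ n) :=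
      summable_gseq_pow ha (by rw [abs_of_pos hm0]; exact hm1)
    set C : ℝ := (∑' n, gseq a n * m ^ n) / a with hC
    have hub : Tendsto (fun ε : ℝ => ε ^ a * C) (𝓝[Ioo (0:ℝ) m] 0) (𝓝 0) := by
      have h1 : Tendsto (fun ε : ℝ => ε ^ a) (𝓝 (0:ℝ)) (𝓝 ((0:ℝ) ^ a)) :=
        (Real.continuousAt_rpow_const 0 a (Or.inr ha.le)).tendsto
      rw [Real.zero_rpow ha.ne'] at h1
      have h2 : Tendsto (fun ε : ℝ => ε ^ a) (𝓝[Ioo (0:ℝ) m] 0) (𝓝 0) :=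
        h1.mono_left (nhdsWithin_le_nhds (s := Ioo (0:ℝ) m))
      simpa using h2.mul_const C
    refine tendsto_of_tendsto_of_tendsto_of_le_of_le' tendsto_const_nhds hub ?_ ?_
    · filter_upwards [self_mem_nhdsWithin] with ε hε
      obtain ⟨hε0, hεm⟩ := hε
      have hG0 : 0 ≤ ∑' n, gseq a n * ε ^ n :=
        tsum_nonneg fun n => mul_nonneg (gseq_pos ha n).le (pow_nonneg hε0.le n)
      rw [hΘdef]
      have h1e : (0:ℝ) ≤ (1 - ε) ^ ((1:ℝ)/2) := Real.rpow_nonneg (by linarith) _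
      have hεa : (0:ℝ) ≤ ε ^ a := Real.rpow_nonneg hε0.le a
      exact div_nonneg (mul_nonneg (mul_nonneg hεa h1e) hG0) ha.le
    · filter_upwards [self_mem_nhdsWithin] with ε hε
      obtain ⟨hε0, hεm⟩ := hε
      have hGe : Summable (fun n => gseq a n * ε ^ n) :=
        summable_gseq_pow ha (by rw [abs_of_pos hε0]; linarith)
      have hGle : (∑' n, gseq a n * ε ^ n) ≤ ∑' n, gseq a n * m ^ n := by
        refine Summable.tsum_le_tsum (fun n => ?_) hGe hGm
        exact mul_le_mul_of_nonneg_left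
          (pow_le_pow_left₀ hε0.le hεm.le n) (gseq_pos ha n).le
      have hG0 : 0 ≤ ∑' n, gseq a n * ε ^ n :=
        tsum_nonneg fun n => mul_nonneg (gseq_pos ha n).le (pow_nonneg hε0.le n)
      have h1 : (1 - ε) ^ ((1:ℝ)/2) ≤ 1 :=
        Real.rpow_le_one (by linarith) (by linarith) (by norm_num)
      have hεa : (0:ℝ) ≤ ε ^ a := Real.rpow_nonneg hε0.le a
      calc Θ ε = ε ^ a * (1 - ε) ^ ((1:ℝ)/2) * (∑' n, gseq a n * ε ^ n) / a := rfl
        _ ≤ ε ^ a * 1 * (∑' n, gseq a n * m ^ n) / a := by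
            have h2 : ε ^ a * (1 - ε) ^ ((1:ℝ)/2) * (∑' n, gseq a n * ε ^ n)
                ≤ ε ^ a * 1 * (∑' n, gseq a n * m ^ n) := by
              refine mul_le_mul ?_ hGle hG0 (by nlinarith)
              exact mul_le_mul le_rfl h1 (Real.rpow_nonneg (by linarith) _) hεa
            exact div_le_div_of_nonneg_right h2 ha.le
        _ = ε ^ a * C := by rw [hC]; ring
  have t2 : Tendsto (fun ε => (∫ t in (0:ℝ)..ε, f t) - Θ ε) (𝓝[Ioo (0:ℝ) m] 0) (𝓝 0) := by
    simpa using tΨ.sub tΘ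
  have := tendsto_nhds_unique t1 t2
  linarith


noncomputable def cseq (b : ℝ) (n : ℕ) : ℝ := poch b n / poch (1/2) n







lemma hyp2F1_one_eq (b z : ℝ) : hyp2F1 1 b (1/2) z = ∑' n, cseq b n * z ^ n := by
  refine tsum_congr fun n => ?_
  rw [cseq, poch_one]
  have h : (n.factorial : ℝ) ≠ 0 := Nat.cast_ne_zero.2 n.factorial_ne_zero
  rw [show ((n.factorial:ℝ)) * poch b n / poch (1/2) n * z ^ n / (n.factorial:ℝ)
      = poch b n / poch (1/2) n * z ^ n * ((n.factorial:ℝ) / (n.factorial:ℝ)) from by ring,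
    div_self h, mul_one]

lemma integral_g {a m K : ℝ} (ha : 1/2 ≤ a) (hK : 0 ≤ K) (hm0 : 0 < m) (hm1 : m < 1) :
    ∫ x in Ioo (0:ℝ) m,
        K * (x ^ (-((1:ℝ)/2)) * (m - x) ^ (a - 1/2) * hyp2F1 1 (a + 1/2) (1/2) x)
      = K * Real.sqrt π * Real.Gamma (a + 1/2) / Real.Gamma (a + 1) * m ^ a
          * (∑' n, gseq a n * m ^ n) := by
  have ha0 : (0:ℝ) < a := lt_of_lt_of_le (by norm_num) ha
  have hb0 : (0:ℝ) < a + 1/2 := by linarith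
  set w : ℕ → ℝ → ℝ := fun n x =>
    (K * cseq (a + 1/2) n) * (x ^ (((n:ℝ) + 1/2) - 1) * (m - x) ^ ((a + 1/2) - 1)) with hw
  have hcpos : ∀ n, 0 < cseq (a + 1/2) n := fun n =>
    div_pos (poch_pos hb0 n) (poch_pos (by norm_num) n)
  set Cst : ℝ := K * Real.sqrt π * Real.Gamma (a + 1/2) / Real.Gamma (a + 1) * m ^ a
    with hCst
  have heq : ∀ x ∈ Ioo (0:ℝ) m,
      K * (x ^ (-((1:ℝ)/2)) * (m - x) ^ (a - 1/2) * hyp2F1 1 (a + 1/2) (1/2) x)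
        = ∑' n, w n x := by
    rintro x ⟨hx0, hxm⟩
    rw [hyp2F1_one_eq]
    rw [show K * (x ^ (-((1:ℝ)/2)) * (m - x) ^ (a - 1/2)
          * (∑' n, cseq (a + 1/2) n * x ^ n))
        = (K * (x ^ (-((1:ℝ)/2)) * (m - x) ^ (a - 1/2)))
          * (∑' n, cseq (a + 1/2) n * x ^ n) from by ring, ← tsum_mul_left]
    refine tsum_congr fun n => ?_
    rw [hw]
    have hxn : x ^ (n:ℕ) = x ^ ((n:ℝ)) := (Real.rpow_natCast x n).symm
    have hxe : x ^ (-((1:ℝ)/2)) * x ^ ((n:ℝ)) = x ^ (((n:ℝ) + 1/2) - 1) := by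
      rw [← Real.rpow_add hx0]; congr 1; ring
    simp only
    rw [hxn, show ((a:ℝ) + 1/2) - 1 = a - 1/2 from by ring, ← hxe]
    ring
  have hval : ∀ n, ∫ x in Ioo (0:ℝ) m, w n x = Cst * (gseq a n * m ^ n) := by
    intro n
    rw [hw]
    simp only
    rw [MeasureTheory.integral_const_mul,
      betaReal_scaled hm0 (p := (n:ℝ) + 1/2) (by positivity) hb0]
    have h1 : Real.Gamma ((n:ℝ) + 1/2) = poch (1/2) n * Real.sqrt π := by
      rw [show ((n:ℝ) + 1/2) = 1/2 + (n:ℕ) from by push_cast; ring,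
        Gamma_add_nat (by norm_num : (0:ℝ) < 1/2), Real.Gamma_one_half_eq]
    have h2 : Real.Gamma (((n:ℝ) + 1/2) + (a + 1/2)) = poch (a+1) n * Real.Gamma (a+1) := by
      rw [show ((n:ℝ) + 1/2) + (a + 1/2) = (a+1) + (n:ℕ) from by push_cast; ring,
        Gamma_add_nat (by linarith : (0:ℝ) < a + 1)]
    have h3 : m ^ (((n:ℝ) + 1/2) + (a + 1/2) - 1) = m ^ a * m ^ (n:ℕ) := by
      rw [← Real.rpow_natCast m n, ← Real.rpow_add hm0]; congr 1; push_cast; ring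
    rw [h1, h2, h3, hCst, cseq, gseq]
    have hp1 : poch (1/2:ℝ) n ≠ 0 := (poch_pos (by norm_num) n).ne'
    have hp2 : poch (a+1:ℝ) n ≠ 0 := (poch_pos (by linarith) n).ne'
    have hΓ : Real.Gamma (a+1) ≠ 0 := (Real.Gamma_pos_of_pos (by linarith)).ne'
    field_simp
  have hInt : ∀ n, IntegrableOn (w n) (Ioo (0:ℝ) m) := fun n => by
    rw [hw]
    exact (betaIntegrableOn hm0 (by positivity) (by linarith)).const_mul _
  have hnonneg : ∀ n, ∀ x ∈ Ioo (0:ℝ) m, 0 ≤ w n x := by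
    rintro n x ⟨hx0, hxm⟩
    rw [hw]
    simp only
    have := hcpos n
    have h1 : (0:ℝ) ≤ x ^ (((n:ℝ) + 1/2) - 1) := Real.rpow_nonneg hx0.le _
    have h2 : (0:ℝ) ≤ (m - x) ^ ((a + 1/2) - 1) := Real.rpow_nonneg (by linarith) _
    positivity
  have hnorm : ∀ n, ∫ x in Ioo (0:ℝ) m, ‖w n x‖ = ∫ x in Ioo (0:ℝ) m, w n x :=
    fun n => MeasureTheory.setIntegral_congr_fun measurableSet_Ioo
      (fun x hx => Real.norm_of_nonneg (hnonneg n x hx))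
  have hsum : Summable (fun n => ∫ x in Ioo (0:ℝ) m, ‖w n x‖) := by
    have hfe : (fun n => ∫ x in Ioo (0:ℝ) m, ‖w n x‖)
        = fun n => Cst * (gseq a n * m ^ n) := funext fun n => by rw [hnorm n, hval n]
    rw [hfe]
    exact (summable_gseq_pow ha0 (by rw [abs_of_pos hm0]; exact hm1)).mul_left _
  calc ∫ x in Ioo (0:ℝ) m,
        K * (x ^ (-((1:ℝ)/2)) * (m - x) ^ (a - 1/2) * hyp2F1 1 (a + 1/2) (1/2) x)
      = ∫ x in Ioo (0:ℝ) m, ∑' n, w n x :=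
        MeasureTheory.setIntegral_congr_fun measurableSet_Ioo heq
    _ = ∑' n, ∫ x in Ioo (0:ℝ) m, w n x :=
        (MeasureTheory.integral_tsum_of_summable_integral_norm hInt hsum).symm
    _ = ∑' n, Cst * (gseq a n * m ^ n) := tsum_congr hval
    _ = Cst * ∑' n, gseq a n * m ^ n := tsum_mul_left


lemma rpow_identity {A B CC D f aa : ℝ} (hA : 0 < A) (hB : 0 < B) (hC : 0 < CC)
    (hD : 0 < D) :
    A ^ (-aa) * (D / A) ^ (aa + 1/2) * (D / B) ^ ((1:ℝ)/2) * f * (A * CC) ^ aa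
      = D * (A * CC) ^ ((1:ℝ)/2) / A ^ 2
        * (D ^ ((1:ℝ)/2) * 2 ^ (aa - 1/2)
          * ((B / A) ^ (-((1:ℝ)/2)) * (D * CC / (2 * A)) ^ (aa - 1/2) * f)) := by
  have h2 : (0:ℝ) < 2 := two_pos
  have hDA : 0 < D / A := div_pos hD hA
  have hDB : 0 < D / B := div_pos hD hB
  have hBA : 0 < B / A := div_pos hB hA
  have hAC : 0 < A * CC := mul_pos hA hC
  have hDC : 0 < D * CC := mul_pos hD hC
  have h2A : 0 < 2 * A := mul_pos h2 hA
  have hDC2A : 0 < D * CC / (2 * A) := div_pos hDC h2A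
  have key : A ^ (-aa) * (D / A) ^ (aa + 1/2) * (D / B) ^ ((1:ℝ)/2) * (A * CC) ^ aa
      = D * (A * CC) ^ ((1:ℝ)/2) / A ^ 2
        * (D ^ ((1:ℝ)/2) * 2 ^ (aa - 1/2)
          * ((B / A) ^ (-((1:ℝ)/2)) * (D * CC / (2 * A)) ^ (aa - 1/2))) := by
    have hP : 0 < A ^ (-aa) * (D / A) ^ (aa + 1/2) * (D / B) ^ ((1:ℝ)/2) * (A * CC) ^ aa := by
      positivity
    have hQ : 0 < D * (A * CC) ^ ((1:ℝ)/2) / A ^ 2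
        * (D ^ ((1:ℝ)/2) * 2 ^ (aa - 1/2)
          * ((B / A) ^ (-((1:ℝ)/2)) * (D * CC / (2 * A)) ^ (aa - 1/2))) := by
      positivity
    rw [← Real.exp_log hP, ← Real.exp_log hQ]
    congr 1
    repeat
      first
      | rw [Real.log_mul (by positivity) (by positivity)]
      | rw [Real.log_div (by positivity) (by positivity)]
      | rw [Real.log_rpow (by positivity)]
      | rw [Real.log_pow]
    ring
  linear_combination f * key

/-- For an integer `d ≥ 3` and `0 < α < π`,
`∫_α^π (1−cos η)^{−(d−2)/2} ((1−cos α)/(1−cos η))^{(d−1)/2}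
   ((1−cos α)/(cos α − cos η))^{1/2} ₂F₁(1,(d−1)/2;1/2;(cos α − cos η)/(1−cos η))
   sin^{d−2} η dη
  = (√π 2^{(d−2)/2} Γ((d−1)/2)/Γ((d−2)/2)) B(cos²(α/2); (d−2)/2, 1/2)`. -/
theorem point_charge_field_integral (d : ℕ) (hd : 3 ≤ d) (α : ℝ)
    (h0 : 0 < α) (h1 : α < π) :
    (∫ η in α..π,
        (1 - Real.cos η) ^ (-(((d:ℝ) - 2)/2))
        * ((1 - Real.cos α)/(1 - Real.cos η)) ^ (((d:ℝ) - 1)/2)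
        * ((1 - Real.cos α)/(Real.cos α - Real.cos η)) ^ ((1:ℝ)/2)
        * hyp2F1 1 (((d:ℝ) - 1)/2) (1/2) ((Real.cos α - Real.cos η)/(1 - Real.cos η))
        * Real.sin η ^ ((d:ℝ) - 2))
      = Real.sqrt π * 2 ^ (((d:ℝ) - 2)/2) * Real.Gamma (((d:ℝ) - 1)/2)
          / Real.Gamma (((d:ℝ) - 2)/2)
        * incBeta (Real.cos (α/2) ^ 2) (((d:ℝ) - 2)/2) (1/2) := by
  have hd3 : (3:ℝ) ≤ (d:ℝ) := by exact_mod_cast hd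
  set a : ℝ := ((d:ℝ) - 2)/2 with ha_def
  have ha : 1/2 ≤ a := by rw [ha_def]; linarith
  have ha0 : (0:ℝ) < a := by linarith
  set c : ℝ := Real.cos α with hc_def
  set m : ℝ := Real.cos (α/2) ^ 2 with hm_def
  have hcm : m = 1/2 + c/2 := by
    rw [hm_def, hc_def, Real.cos_sq, show 2 * (α/2) = α from by ring]
  have hc1 : c < 1 := by
    have := Real.cos_lt_cos_of_nonneg_of_le_pi (le_refl 0) h1.le h0
    simpa [hc_def] using this
  have hcn1 : -1 < c := by
    have := Real.cos_lt_cos_of_nonneg_of_le_pi h0.le (le_refl π) h1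
    simpa [hc_def, Real.cos_pi] using this
  have hm0 : 0 < m := by rw [hcm]; linarith
  have hm1 : m < 1 := by rw [hcm]; linarith
  have hD : (0:ℝ) < 1 - c := by linarith
  set K : ℝ := (1 - c) ^ ((1:ℝ)/2) * 2 ^ (a - 1/2) with hK_def
  have hK0 : (0:ℝ) ≤ K :=
    mul_nonneg (Real.rpow_nonneg hD.le _) (Real.rpow_nonneg (by norm_num) _)
  set g : ℝ → ℝ := fun x =>
    K * (x ^ (-((1:ℝ)/2)) * (m - x) ^ (a - 1/2) * hyp2F1 1 (a + 1/2) (1/2) x) with hg_def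
  set u : ℝ → ℝ := fun η => (c - Real.cos η)/(1 - Real.cos η) with hu_def
  set u' : ℝ → ℝ := fun η => (1 - c) * Real.sin η / (1 - Real.cos η)^2 with hu'_def
  -- basic facts on Ioo α π
  have hfacts : ∀ η ∈ Ioo α π,
      Real.cos η < c ∧ -1 < Real.cos η ∧ 0 < Real.sin η := by
    rintro η ⟨hαη, hηπ⟩
    refine ⟨?_, ?_, Real.sin_pos_of_pos_of_lt_pi (h0.trans hαη) hηπ⟩
    · rw [hc_def]
      exact Real.cos_lt_cos_of_nonneg_of_le_pi h0.le hηπ.le hαη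
    · have := Real.cos_lt_cos_of_nonneg_of_le_pi (h0.trans hαη).le (le_refl π) hηπ
      simpa [Real.cos_pi] using this
  have hderiv_at : ∀ η ∈ Ioo α π, HasDerivAt u (u' η) η := by
    intro η hη
    obtain ⟨hsc, hs1, hsin⟩ := hfacts η hη
    have hA : (0:ℝ) < 1 - Real.cos η := by linarith
    have h1' : HasDerivAt (fun z => c - Real.cos z) (Real.sin η) η := by
      simpa using (Real.hasDerivAt_cos η).const_sub c
    have h2' : HasDerivAt (fun z => 1 - Real.cos z) (Real.sin η) η := by
      simpa using (Real.hasDerivAt_cos η).const_sub 1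
    have := h1'.div h2' hA.ne'
    refine this.congr_deriv ?_
    rw [hu'_def]
    field_simp
    ring
  have hu'pos : ∀ η ∈ Ioo α π, 0 < u' η := by
    intro η hη
    obtain ⟨hsc, hs1, hsin⟩ := hfacts η hη
    have hA : (0:ℝ) < 1 - Real.cos η := by linarith
    rw [hu'_def]
    positivity
  have hmono : StrictMonoOn u (Ioo α π) := by
    refine strictMonoOn_of_deriv_pos (convex_Ioo α π) ?_ ?_
    · exact fun η hη => ((hderiv_at η hη).continuousAt).continuousWithinAt
    · intro η hη
      rw [interior_Ioo] at hη
      rw [(hderiv_at η hη).deriv]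
      exact hu'pos η hη
  have hinj : InjOn u (Ioo α π) := hmono.injOn
  have hDW : ∀ η ∈ Ioo α π, HasDerivWithinAt u (u' η) (Ioo α π) η :=
    fun η hη => (hderiv_at η hη).hasDerivWithinAt
  have huα : u α = 0 := by rw [hu_def]; simp [hc_def]
  have huπ : u π = m := by
    rw [hu_def]
    simp only [Real.cos_pi]
    rw [hcm]; ring
  have himg : u '' Ioo α π = Ioo 0 m := by
    apply Subset.antisymm
    · rintro _ ⟨η, hη, rfl⟩
      obtain ⟨hsc, hs1, hsin⟩ := hfacts η hη
      have hA : (0:ℝ) < 1 - Real.cos η := by linarith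
      constructor
      · exact div_pos (by linarith) hA
      · rw [hu_def]
        simp only
        rw [div_lt_iff₀ hA, hcm]
        nlinarith
    · have hcont : ContinuousOn u (Icc α π) := by
        apply ContinuousOn.div
        · exact (continuous_const.sub Real.continuous_cos).continuousOn
        · exact (continuous_const.sub Real.continuous_cos).continuousOn
        · intro η hη
          have : Real.cos η ≤ c := by
            rw [hc_def]
            exact Real.cos_le_cos_of_nonneg_of_le_pi h0.le hη.2 hη.1
          intro hzero
          have : Real.cos η = 1 := by linarith
          linarith [this.symm.trans_lt (lt_of_le_of_lt ‹Real.cos η ≤ c› hc1)]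
      have := intermediate_value_Ioo h1.le hcont
      rw [huα, huπ] at this
      exact this
  -- pointwise identity
  have hpoint : ∀ η ∈ Ioo α π,
      (1 - Real.cos η) ^ (-a)
        * ((1 - c)/(1 - Real.cos η)) ^ (((d:ℝ) - 1)/2)
        * ((1 - c)/(c - Real.cos η)) ^ ((1:ℝ)/2)
        * hyp2F1 1 (((d:ℝ) - 1)/2) (1/2) ((c - Real.cos η)/(1 - Real.cos η))
        * Real.sin η ^ ((d:ℝ) - 2)
      = |u' η| • g (u η) := by
    rintro η hη
    obtain ⟨hsc, hs1, hsin⟩ := hfacts η hη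
    have hA : (0:ℝ) < 1 - Real.cos η := by linarith
    have hB : (0:ℝ) < c - Real.cos η := by linarith
    have hC : (0:ℝ) < 1 + Real.cos η := by linarith
    rw [abs_of_pos (hu'pos η hη), smul_eq_mul]
    rw [show ((d:ℝ) - 1)/2 = a + 1/2 from by rw [ha_def]; ring]
    set f : ℝ := hyp2F1 1 (a + 1/2) (1/2) ((c - Real.cos η)/(1 - Real.cos η)) with hf_def
    set A : ℝ := 1 - Real.cos η with hA_def
    set B : ℝ := c - Real.cos η with hB_def
    set CC : ℝ := 1 + Real.cos η with hCC_def
    set D : ℝ := 1 - c with hD_def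
    have hsin_pow : Real.sin η ^ ((d:ℝ) - 2) = (A * CC) ^ a := by
      rw [show ((d:ℝ) - 2) = 2 * a from by rw [ha_def]; ring,
        Real.rpow_mul hsin.le, show ((2:ℝ)) = ((2:ℕ):ℝ) from by norm_num,
        Real.rpow_natCast, Real.sin_sq]
      congr 1
      rw [hA_def, hCC_def]; ring
    have hM : u η = B / A := by rw [hu_def]
    have hmu : m - u η = D * CC / (2 * A) := by
      rw [hM, hcm, hD_def, hCC_def, hB_def, hA_def]
      have hA' : (1:ℝ) - Real.cos η ≠ 0 := by linarith
      field_simp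
      ring
    have hE : Real.sin η = (A * CC) ^ ((1:ℝ)/2) := by
      rw [show A * CC = Real.sin η ^ 2 from by rw [hA_def, hCC_def, Real.sin_sq]; ring,
        ← Real.rpow_natCast (Real.sin η) 2, ← Real.rpow_mul hsin.le]
      norm_num
    have hu'val : u' η = D * ((A * CC) ^ ((1:ℝ)/2)) / A ^ 2 := by
      rw [hu'_def]
      simp only
      rw [← hA_def, hE]
    -- now the algebra
    rw [hg_def]
    simp only
    rw [hM, hmu, hu'val, ← hf_def, hsin_pow, hK_def]
    exact rpow_identity hA hB hC hD
  -- assemble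
  have himg_int := MeasureTheory.integral_image_eq_integral_abs_deriv_smul
    measurableSet_Ioo hDW hinj g
  rw [intervalIntegral.integral_of_le h1.le, MeasureTheory.integral_Ioc_eq_integral_Ioo,
    MeasureTheory.setIntegral_congr_fun measurableSet_Ioo hpoint, ← himg_int, himg]
  have hbeta : incBeta m a (1/2)
      = m ^ a * (1 - m) ^ ((1:ℝ)/2) * (∑' n, gseq a n * m ^ n) / a := by
    rw [incBeta]
    exact incBeta_aux ha0 hm0 hm1
  have hKval : K = 2 ^ a * (1 - m) ^ ((1:ℝ)/2) := by
    rw [hK_def, show (1:ℝ) - c = 2 * (1 - m) from by rw [hcm]; ring,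
      Real.mul_rpow (by norm_num : (0:ℝ) ≤ 2) (by linarith : (0:ℝ) ≤ 1 - m)]
    rw [show (2:ℝ) ^ ((1:ℝ)/2) * (1 - m) ^ ((1:ℝ)/2) * 2 ^ (a - 1/2)
        = ((2:ℝ) ^ ((1:ℝ)/2) * 2 ^ (a - 1/2)) * (1 - m) ^ ((1:ℝ)/2) from by ring,
      ← Real.rpow_add (by norm_num : (0:ℝ) < 2)]
    ring_nf
  have hGa : Real.Gamma (a + 1) = a * Real.Gamma a := Real.Gamma_add_one ha0.ne'
  have hΓa : Real.Gamma a ≠ 0 := (Real.Gamma_pos_of_pos ha0).ne'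
  have hgoal2 : ((d:ℝ) - 1)/2 = a + 1/2 := by rw [ha_def]; ring
  rw [hg_def]
  rw [integral_g ha hK0 hm0 hm1, hgoal2, hbeta, hKval, hGa]
  field_simp
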